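/- Let n be a natural number and let C be a linear order having Hausdorff degree ≤ n. Then C is scattered, i.e. there is no order embedding of ℚ into C. -/
import Mathlib


universe u

/-- The linear order `C` has Hausdorff degree ≤ `n`: degree ≤ 0 means finite, and degree
≤ n+1 means `C` is a well-ordered or inversely well-ordered sum of orders of degree ≤ n. -/
def HdegLe : ℕ → (C : Type u) → [LinearOrder C] → Prop
  | 0, C, _ => Finite C
  | n + 1, C, _ => ∃ (I : Type u) (_ : LinearOrder I),
      (WellFoundedLT I ∨ WellFoundedGT I) ∧
      ∃ g : C → I, Monotone g ∧ ∀ i : I, HdegLe n {c : C // g c = i}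

private lemma rat_not_wfLT : ¬ WellFoundedLT ℚ := by
  intro h
  obtain ⟨m, -, hm⟩ := h.wf.has_min Set.univ ⟨0, trivial⟩
  exact hm (m - 1) trivial (by linarith)

private lemma rat_not_wfGT : ¬ WellFoundedGT ℚ := by
  intro h
  obtain ⟨m, -, hm⟩ := h.wf.has_min Set.univ ⟨0, trivial⟩
  exact hm (m + 1) trivial (by linarith)

/-- A linear order of finite Hausdorff degree is scattered: ℚ does not order-embed in it. -/
theorem scattered_of_hdegLe {C : Type u} [LinearOrder C] {n : ℕ} (hC : HdegLe n C) :
    ¬ Nonempty (ℚ ↪o C) := by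
  induction n generalizing C with
  | zero =>
    rintro ⟨f⟩
    haveI : Finite C := hC
    haveI : Finite ℚ := Finite.of_injective f f.injective
    exact not_finite ℚ
  | succ n ih =>
    rintro ⟨f⟩
    obtain ⟨I, _, hwf, g, hg, hfib⟩ := hC
    by_cases h : ∃ q q' : ℚ, q < q' ∧ g (f q) = g (f q')
    · obtain ⟨q, q', hlt, heq⟩ := h
      set i := g (f q) with hi
      have hmem : ∀ x ∈ Set.Ioo q q', g (f x) = i := by
        intro x hx
        refine le_antisymm ?_ ?_
        · rw [heq]; exact hg (f.monotone hx.2.le)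
        · exact hg (f.monotone hx.1.le)
      -- ℚ is order isomorphic to the open interval (q, q')
      haveI : Nonempty (Set.Ioo q q') := Set.nonempty_Ioo.2 hlt |>.to_subtype
      obtain ⟨e⟩ := Order.iso_of_countable_dense ℚ (Set.Ioo q q')
      -- embed the interval into the fiber over i
      have emb : Set.Ioo q q' ↪o {c : C // g c = i} :=
        OrderEmbedding.ofStrictMono (fun x => ⟨f x, hmem x x.2⟩)
          (fun a b hab => by
            simp only [Subtype.mk_lt_mk]
            exact f.strictMono (Subtype.coe_lt_coe.2 hab))
      exact ih (hfib i) ⟨e.toOrderEmbedding.trans emb⟩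
    · push_neg at h
      have hsm : StrictMono (fun x : ℚ => g (f x)) := fun a b hab =>
        lt_of_le_of_ne (hg (f.monotone hab.le)) (h a b hab)
      have e : ℚ ↪o I := OrderEmbedding.ofStrictMono _ hsm
      rcases hwf with hwf | hwf
      · exact rat_not_wfLT e.wellFoundedLT
      · exact rat_not_wfGT e.wellFoundedGT
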